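/- arXiv:1110.5166 — 2 statements merged into one kernel-verified Lean document; each statement's English description precedes it below -/
import Mathlib

section
/- If M is a binary matroid, then for any two disjoint bases A and B of M and any two distinct elements a, a' ∈ A, the set Conn(a,a',A,B) = {b ∈ B : A - a' + b and B - b + a are bases} has even cardinality. -/
open Set

variable {α : Type*}

/-- A circuit: a minimal dependent set. -/
def IsCircuit (M : Matroid α) (C : Set α) : Prop :=
  M.Dep C ∧ ∀ D, D ⊂ C → M.Indep D

/-- `C` is the fundamental circuit of `x` with respect to the basis `B`:
the unique circuit contained in `B ∪ {x}`. -/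
def IsFundCct (M : Matroid α) (C : Set α) (x : α) (B : Set α) : Prop :=
  IsCircuit M C ∧ x ∈ C ∧ C ⊆ insert x B

/-- `SymEx M a A B` : the elements `b ∈ B` such that `A - a + b` and `B - b + a` are bases. -/
def SymEx (M : Matroid α) (a : α) (A B : Set α) : Set α :=
  {b ∈ B | M.IsBase (insert b (A \ {a})) ∧ M.IsBase (insert a (B \ {b}))}

/-- `ConnEx M a a' A B` : the elements `b ∈ B` such that `A - a' + b` and `B - b + a` are bases. -/
def ConnEx (M : Matroid α) (a a' : α) (A B : Set α) : Set α :=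
  {b ∈ B | M.IsBase (insert b (A \ {a'})) ∧ M.IsBase (insert a (B \ {b}))}

/-- A binary matroid, via the circuit characterization: the symmetric difference of
any two distinct circuits contains a circuit. -/
def Binary (M : Matroid α) : Prop :=
  ∀ C₁ C₂, IsCircuit M C₁ → IsCircuit M C₂ → C₁ ≠ C₂ →
    ∃ C, IsCircuit M C ∧ C ⊆ symmDiff C₁ C₂

/-- A hyperplane: a maximal proper flat. -/
def IsHyperplane (M : Matroid α) (H : Set α) : Prop :=
  M.IsFlat H ∧ H ≠ M.E ∧ ∀ F, M.IsFlat F → H ⊂ F → F = M.E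

lemma IsCircuit.dep {M : Matroid α} {C : Set α} (h : IsCircuit M C) : M.Dep C := h.1

lemma IsCircuit.subset_ground {M : Matroid α} {C : Set α} (h : IsCircuit M C) : C ⊆ M.E :=
  h.1.2

lemma IsCircuit.ssubset_indep {M : Matroid α} {C D : Set α} (h : IsCircuit M C) (hD : D ⊂ C) :
    M.Indep D := h.2 D hD

lemma IsCircuit.nonempty {M : Matroid α} {C : Set α} (h : IsCircuit M C) : C.Nonempty := by
  rcases eq_empty_or_nonempty C with rfl | hne
  · exact absurd M.empty_indep h.1.1
  · exact hne

lemma IsCircuit.eq_of_dep_subset {M : Matroid α} {C D : Set α} (h : IsCircuit M C)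
    (hdep : M.Dep D) (hsub : D ⊆ C) : D = C := by
  by_contra hne
  exact hdep.1 (h.ssubset_indep (ssubset_of_subset_of_ne hsub hne))

/-- every finite dependent set contains a circuit. -/
lemma exists_circuit_subset {M : Matroid α} {X : Set α} (hX : X.Finite) (hdep : M.Dep X) :
    ∃ C, IsCircuit M C ∧ C ⊆ X := by
  classical
  induction' hn : X.ncard using Nat.strong_induction_on with n IH generalizing X
  by_cases hmin : ∀ D, D ⊂ X → M.Indep D
  · exact ⟨X, ⟨hdep, hmin⟩, Subset.rfl⟩
  push_neg at hmin
  obtain ⟨D, hDX, hDdep⟩ := hmin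
  have hDdep' : M.Dep D := ⟨hDdep, hDX.subset.trans hdep.2⟩
  obtain ⟨C, hC, hCD⟩ := IH (D.ncard) (by
      subst hn; exact Set.ncard_lt_ncard hDX hX) (hX.subset hDX.subset) hDdep' rfl
  exact ⟨C, hC, hCD.trans hDX.subset⟩

lemma IsCircuit.mem_closure_diff_singleton {M : Matroid α} {C : Set α} (h : IsCircuit M C)
    {x : α} (hx : x ∈ C) : x ∈ M.closure (C \ {x}) := by
  have hind : M.Indep (C \ {x}) := h.ssubset_indep (sdiff_singleton_ssubset.2 hx)
  have : M.Dep (insert x (C \ {x})) := by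
    rw [insert_diff_singleton, insert_eq_of_mem hx]; exact h.dep
  rw [hind.insert_dep_iff] at this
  exact this.1

lemma IsCircuit.closure_diff_singleton {M : Matroid α} {C : Set α} (h : IsCircuit M C)
    {x : α} (hx : x ∈ C) : M.closure (C \ {x}) = M.closure C :=
  Matroid.closure_diff_singleton_eq_closure (h.mem_closure_diff_singleton hx)

/-- fundamental circuit existence -/
lemma exists_circuit_of_mem_closure {M : Matroid α} [M.Finite] {I : Set α} {a : α}
    (hI : M.Indep I) (ha : a ∈ M.closure I) (haI : a ∉ I) :
    ∃ C, IsCircuit M C ∧ a ∈ C ∧ C ⊆ insert a I := by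
  have hdep : M.Dep (insert a I) := hI.insert_dep_iff.2 ⟨ha, haI⟩
  obtain ⟨C, hC, hCsub⟩ := exists_circuit_subset (M.set_finite _ hdep.2) hdep
  refine ⟨C, hC, ?_, hCsub⟩
  by_contra haC
  exact hC.dep.1 (hI.subset (fun y hy => ((hCsub hy).resolve_left (fun h => haC (h ▸ hy)))))

/-- orthogonality: a circuit and a cocircuit cannot meet in exactly one element. -/
lemma inter_ne_singleton {M : Matroid α} {C D : Set α} {x : α} (hC : IsCircuit M C)
    (hD : IsCircuit M✶ D) (hx : C ∩ D = {x}) : False := by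
  have hxC : x ∈ C := (hx ▸ (mem_singleton x)).1
  have hxD : x ∈ D := (hx ▸ (mem_singleton x)).2
  have hDE : D ⊆ M.E := hD.subset_ground
  -- E \ (D \ {x}) is spanning
  have hind : M✶.Indep (D \ {x}) := hD.ssubset_indep (sdiff_singleton_ssubset.2 hxD)
  have hspan : M.Spanning (M.E \ (D \ {x})) := by
    rw [← Matroid.coindep_iff_compl_spanning (diff_subset.trans hDE)]
    exact Matroid.coindep_def.2 hind
  -- but E \ D is not spanning
  have hnspan : ¬ M.Spanning (M.E \ D) := by
    intro hsp
    have : M.Coindep D := (Matroid.coindep_iff_compl_spanning hDE).2 hsp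
    exact hD.dep.1 this.indep
  -- x ∈ closure (E \ D)
  have hsub : C \ {x} ⊆ M.E \ D := by
    intro y hy
    refine ⟨hC.subset_ground hy.1, fun hyD => hy.2 ?_⟩
    have : y ∈ C ∩ D := ⟨hy.1, hyD⟩
    rw [hx] at this; exact this
  have hxcl : x ∈ M.closure (M.E \ D) :=
    M.closure_subset_closure hsub (hC.mem_closure_diff_singleton hxC)
  have hED : M.E \ (D \ {x}) = insert x (M.E \ D) := by
    ext y
    by_cases hyx : y = x
    · subst hyx; simp [hDE hxD]
    · simp [hyx]
  apply hnspan
  rw [Matroid.spanning_iff_closure_eq]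
  have h1 : M.closure (M.E \ (D \ {x})) = M.E := by
    rw [Matroid.spanning_iff_closure_eq] at hspan; exact hspan
  rw [hED, Matroid.closure_insert_eq_of_mem_closure hxcl] at h1
  exact h1

/-! ### Single-element contraction, via dual-restrict-dual -/

/-- Contraction of a single element, defined by duality. -/
def conM (M : Matroid α) (w : α) : Matroid α := ((M✶).restrict (M.E \ {w}))✶

lemma conM_ground {M : Matroid α} {w : α} : (conM M w).E = M.E \ {w} := by
  rw [conM, Matroid.dual_ground, Matroid.restrict_ground_eq]

lemma conM_dual {M : Matroid α} {w : α} : (conM M w)✶ = (M✶).restrict (M.E \ {w}) :=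
  Matroid.dual_dual _

lemma conM_finite {M : Matroid α} [M.Finite] {w : α} : (conM M w).Finite :=
  ⟨by rw [conM_ground]; exact M.ground_finite.subset diff_subset⟩

lemma compl_diff_diff_eq {E B' : Set α} {w : α} (hB' : B' ⊆ E \ {w}) (hw : w ∈ E) :
    E \ ((E \ {w}) \ B') = insert w B' := by
  ext y
  by_cases hyw : y = w
  · subst hyw
    simp [hw]
  · simp only [mem_diff, mem_singleton_iff, mem_insert_iff]
    constructor
    · rintro ⟨hyE, h⟩
      exact Or.inr (Classical.byContradiction fun hyB => h ⟨⟨hyE, hyw⟩, hyB⟩)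
    · rintro (rfl | hyB)
      · exact absurd rfl hyw
      · exact ⟨(hB' hyB).1, fun h => h.2 hyB⟩

lemma conM_base_iff {M : Matroid α} {w : α} (hw : M.Indep {w}) {B' : Set α}
    (hB' : B' ⊆ M.E \ {w}) : (conM M w).IsBase B' ↔ M.IsBase (insert w B') := by
  have hwE : w ∈ M.E := hw.subset_ground rfl
  have hXE : M.E \ {w} ⊆ M✶.E := by rw [Matroid.dual_ground]; exact diff_subset
  have h1 : (conM M w).IsBase B' ↔ M✶.IsBasis ((M.E \ {w}) \ B') (M.E \ {w}) := by
    rw [conM, Matroid.dual_isBase_iff (by rw [Matroid.restrict_ground_eq]; exact hB'),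
      Matroid.restrict_ground_eq, Matroid.isBase_restrict_iff hXE]
  rw [h1]
  constructor
  · intro hBasis
    obtain ⟨Bs, hBs, hJeq⟩ := hBasis.exists_isBase
    have hBsE : Bs ⊆ M.E := hBs.subset_ground
    have hBssub : Bs ⊆ ((M.E \ {w}) \ B') ∪ {w} := by
      intro y hy
      by_cases hyw : y = w
      · exact Or.inr (by simp [hyw])
      · left
        rw [hJeq]
        exact ⟨hy, ⟨hBsE hy, hyw⟩⟩
    have hwBs : w ∉ Bs := by
      intro hwBs
      have hJ : ((M.E \ {w}) \ B') = Bs \ {w} := by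
        rw [hJeq]
        ext y
        constructor
        · rintro ⟨hyBs, _, hyw2⟩
          exact ⟨hyBs, hyw2⟩
        · rintro ⟨hyBs, hyw⟩
          exact ⟨hyBs, hBsE hyBs, hyw⟩
      have hsp : M✶.Spanning (M✶.E \ {w}) := by
        rw [← Matroid.coindep_iff_compl_spanning (by simp [hwE])]
        exact Matroid.dual_coindep_iff.2 hw
      have hwcl : w ∈ M✶.closure ((M.E \ {w}) \ B') := by
        have h2 : M.E \ {w} ⊆ M✶.closure ((M.E \ {w}) \ B') := hBasis.subset_closure
        have h3 : M✶.closure (M✶.E \ {w}) ⊆ M✶.closure ((M.E \ {w}) \ B') := by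
          apply Matroid.closure_subset_closure_of_subset_closure
          rwa [Matroid.dual_ground]
        have h4 : w ∈ M✶.closure (M✶.E \ {w}) := by
          rw [Matroid.spanning_iff_closure_eq] at hsp
          rw [hsp, Matroid.dual_ground]
          exact hwE
        exact h3 h4
      rw [hJ] at hwcl
      exact hBs.indep.notMem_closure_diff_of_mem hwBs hwcl
    have hBsJ : Bs = (M.E \ {w}) \ B' := by
      apply Subset.antisymm
      · intro y hy
        rcases hBssub hy with h | h
        · exact h
        · exact absurd (mem_singleton_iff.1 h ▸ hy) hwBs
      · rw [hJeq]
        exact inter_subset_left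
    have := hBs.compl_isBase_of_dual
    rwa [hBsJ, compl_diff_diff_eq hB' hwE] at this
  · intro hBase
    have hwB : w ∈ insert w B' := mem_insert _ _
    have hiff := hBase.inter_isBasis_iff_compl_inter_isBasis_dual (X := {w}) (by simpa using hwE)
    have hbw : M.IsBasis ((insert w B') ∩ {w}) {w} := by
      rw [inter_eq_self_of_subset_right (by simpa using hwB)]
      exact hw.isBasis_self
    have h2 := hiff.1 hbw
    have heq1 : (M.E \ (insert w B')) ∩ (M.E \ {w}) = (M.E \ {w}) \ B' := by
      ext y
      simp only [mem_inter_iff, mem_diff, mem_insert_iff, mem_singleton_iff]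
      tauto
    rw [heq1] at h2
    exact h2

lemma conM_indep_iff {M : Matroid α} {w : α} (hw : M.Indep {w}) {X : Set α}
    (hX : X ⊆ M.E \ {w}) : (conM M w).Indep X ↔ M.Indep (insert w X) := by
  constructor
  · intro h
    obtain ⟨B', hB', hXB'⟩ := h.exists_isBase_superset
    have hB'sub : B' ⊆ M.E \ {w} := by
      have := hB'.subset_ground
      rwa [conM_ground] at this
    exact ((conM_base_iff hw hB'sub).1 hB').indep.subset (insert_subset_insert hXB')
  · intro h
    obtain ⟨B, hB, hXB⟩ := h.exists_isBase_superset
    have hwB : w ∈ B := hXB (mem_insert _ _)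
    have hB'sub : B \ {w} ⊆ M.E \ {w} := diff_subset_diff_left hB.subset_ground
    have hbase : (conM M w).IsBase (B \ {w}) := by
      rw [conM_base_iff hw hB'sub, insert_diff_singleton, insert_eq_of_mem hwB]
      exact hB
    refine hbase.indep.subset ?_
    intro y hy
    exact ⟨hXB (mem_insert_of_mem _ hy), fun hyw => (hX hy).2 hyw⟩

/-! ### Transfer of circuits under restriction and contraction -/

lemma not_indep_superset {M : Matroid α} {X Y : Set α} (hX : M.Dep X) (hXY : X ⊆ Y) :
    ¬ M.Indep Y := fun h => hX.1 (h.subset hXY)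

lemma circuit_restrict_iff {M : Matroid α} {R : Set α} (hR : R ⊆ M.E) {C : Set α} :
    IsCircuit (M.restrict R) C ↔ IsCircuit M C ∧ C ⊆ R := by
  constructor
  · rintro ⟨hdep, hmin⟩
    rw [Matroid.restrict_dep_iff] at hdep
    refine ⟨⟨⟨hdep.1, hdep.2.trans hR⟩, fun D hD => ?_⟩, hdep.2⟩
    exact ((Matroid.restrict_indep_iff).1 (hmin D hD)).1
  · rintro ⟨⟨hdep, hmin⟩, hCR⟩
    refine ⟨Matroid.restrict_dep_iff.2 ⟨hdep.1, hCR⟩, fun D hD => ?_⟩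
    exact Matroid.restrict_indep_iff.2 ⟨hmin D hD, hD.subset.trans hCR⟩

lemma conM_circuit_of_mem {M : Matroid α} {w : α} {C : Set α} (hC : IsCircuit M C)
    (hwC : w ∈ C) (hne : C ≠ {w}) : IsCircuit (conM M w) (C \ {w}) := by
  have hw : M.Indep {w} :=
    hC.ssubset_indep (ssubset_of_subset_of_ne (singleton_subset_iff.2 hwC) (Ne.symm hne))
  have hsub : C \ {w} ⊆ M.E \ {w} := diff_subset_diff_left hC.subset_ground
  have hins : insert w (C \ {w}) = C := by
    rw [insert_diff_singleton, insert_eq_of_mem hwC]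
  constructor
  · refine ⟨fun h => ?_, by rw [conM_ground]; exact hsub⟩
    rw [conM_indep_iff hw hsub, hins] at h
    exact hC.dep.1 h
  · intro D hD
    have hDsub : D ⊆ M.E \ {w} := hD.subset.trans hsub
    rw [conM_indep_iff hw hDsub]
    refine hC.ssubset_indep (ssubset_of_subset_of_ne ?_ ?_)
    · exact insert_subset hwC (hD.subset.trans diff_subset)
    · intro heq
      obtain ⟨x, hxC, hxD⟩ := exists_of_ssubset hD
      have hxmem : x ∈ insert w D := by rw [heq]; exact hxC.1
      rcases hxmem with rfl | hxD'
      · exact hxC.2 rfl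
      · exact hxD hxD'

lemma conM_circuit_lift {M : Matroid α} [M.Finite] {w : α} (hw : M.Indep {w}) {C' : Set α}
    (hC' : IsCircuit (conM M w) C') : IsCircuit M C' ∨ IsCircuit M (insert w C') := by
  have hwE : w ∈ M.E := hw.subset_ground rfl
  have hC'sub : C' ⊆ M.E \ {w} := by
    have := hC'.subset_ground
    rwa [conM_ground] at this
  have hdep : M.Dep (insert w C') := by
    refine ⟨?_, insert_subset hwE (hC'sub.trans diff_subset)⟩
    intro h
    exact hC'.dep.1 ((conM_indep_iff hw hC'sub).2 h)
  obtain ⟨C'', hC'', hsub⟩ := exists_circuit_subset (M.set_finite _ hdep.2) hdep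
  by_cases hwC'' : w ∈ C''
  · right
    have hdiff : C'' \ {w} ⊆ C' := by
      intro y hy
      rcases hsub hy.1 with rfl | h
      · exact absurd rfl hy.2
      · exact h
    have hdepd : (conM M w).Dep (C'' \ {w}) := by
      refine ⟨?_, by rw [conM_ground]; exact (hdiff.trans hC'sub)⟩
      rw [conM_indep_iff hw (hdiff.trans hC'sub), insert_diff_singleton,
        insert_eq_of_mem hwC'']
      exact hC''.dep.1
    have heq := hC'.eq_of_dep_subset hdepd hdiff
    have : insert w C' = C'' := by
      rw [← heq, insert_diff_singleton, insert_eq_of_mem hwC'']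
    rwa [this]
  · left
    have hsub' : C'' ⊆ C' := fun y hy => (hsub hy).resolve_left (fun h => hwC'' (h ▸ hy))
    have hdepd : (conM M w).Dep C'' := by
      refine ⟨?_, by rw [conM_ground]; exact hsub'.trans hC'sub⟩
      rw [conM_indep_iff hw (hsub'.trans hC'sub)]
      exact not_indep_superset hC''.dep (subset_insert _ _)
    rwa [← hC'.eq_of_dep_subset hdepd hsub']

lemma singleton_circuit_of_dep {M : Matroid α} {w : α} (h : ¬ M.Indep {w}) (hwE : w ∈ M.E) :
    IsCircuit M {w} := by
  refine ⟨⟨h, singleton_subset_iff.2 hwE⟩, fun D hD => ?_⟩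
  rw [ssubset_singleton_iff.1 hD]
  exact M.empty_indep

lemma conM_circuit_of_not_mem_closure {M : Matroid α} {w : α} {C : Set α}
    (hC : IsCircuit M C) (hwE : w ∈ M.E) (hwcl : w ∉ M.closure C) :
    IsCircuit (conM M w) C := by
  have hwC : w ∉ C := fun h => hwcl (M.mem_closure_of_mem h hC.subset_ground)
  have hw : M.Indep {w} := by
    by_contra hwl
    have hcirc : IsCircuit M {w} := singleton_circuit_of_dep hwl hwE
    have : w ∈ M.closure (({w} : Set α) \ {w}) := hcirc.mem_closure_diff_singleton rfl
    rw [diff_self] at this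
    exact hwcl (M.closure_subset_closure (empty_subset C) this)
  have hsub : C ⊆ M.E \ {w} := subset_diff_singleton hC.subset_ground hwC
  constructor
  · refine ⟨?_, by rw [conM_ground]; exact hsub⟩
    rw [conM_indep_iff hw hsub]
    exact not_indep_superset hC.dep (subset_insert _ _)
  · intro D hD
    have hDsub : D ⊆ M.E \ {w} := hD.subset.trans hsub
    rw [conM_indep_iff hw hDsub]
    have hDind : M.Indep D := hC.ssubset_indep hD
    have hwD : w ∉ D := fun h => (hDsub h).2 rfl
    rw [hDind.insert_indep_iff_of_notMem hwD]
    exact ⟨hwE, fun h => hwcl (M.closure_subset_closure hD.subset h)⟩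

/-! ### Binary is preserved by restriction and single-element contraction -/

lemma binary_restrict {M : Matroid α} (hM : Binary M) {R : Set α} (hR : R ⊆ M.E) :
    Binary (M.restrict R) := by
  intro C₁ C₂ hC₁ hC₂ hne
  obtain ⟨hC₁', hC₁R⟩ := (circuit_restrict_iff hR).1 hC₁
  obtain ⟨hC₂', hC₂R⟩ := (circuit_restrict_iff hR).1 hC₂
  obtain ⟨C, hC, hCsub⟩ := hM C₁ C₂ hC₁' hC₂' hne
  refine ⟨C, (circuit_restrict_iff hR).2 ⟨hC, ?_⟩, hCsub⟩
  exact hCsub.trans ((symmDiff_subset_union).trans (union_subset hC₁R hC₂R))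

lemma symmDiff_sandwich {C₁ C₂ X₁ X₂ : Set α} {w : α}
    (ha : C₁ ⊆ X₁) (hb : X₁ ⊆ C₁ ∪ {w}) (hc : C₂ ⊆ X₂) (hd : X₂ ⊆ C₂ ∪ {w}) :
    symmDiff X₁ X₂ ⊆ (symmDiff C₁ C₂) ∪ {w} := by
  intro y hy
  rw [Set.mem_symmDiff] at hy
  by_cases hyw : y = w
  · exact Or.inr (by simp [hyw])
  · left
    rw [Set.mem_symmDiff]
    rcases hy with ⟨hy1, hy2⟩ | ⟨hy1, hy2⟩
    · exact Or.inl ⟨(hb hy1).resolve_right (by simpa using hyw), fun h => hy2 (hc h)⟩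
    · exact Or.inr ⟨(hd hy1).resolve_right (by simpa using hyw), fun h => hy2 (ha h)⟩

lemma binary_conM_aux {M : Matroid α} [M.Finite] {w : α} (hw : M.Indep {w})
    {X₁ X₂ S : Set α} (h₁ : IsCircuit M X₁) (h₂ : IsCircuit M X₂) (hne : X₁ ≠ X₂)
    (hM : Binary M) (hS : symmDiff X₁ X₂ ⊆ S ∪ {w}) (hSsub : S ⊆ M.E \ {w}) :
    ∃ C, IsCircuit (conM M w) C ∧ C ⊆ S := by
  obtain ⟨C, hC, hCsub⟩ := hM X₁ X₂ h₁ h₂ hne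
  by_cases hwC : w ∈ C
  · have hCne : C ≠ {w} := by
      intro h
      rw [h] at hC
      exact hC.dep.1 hw
    refine ⟨C \ {w}, conM_circuit_of_mem hC hwC hCne, ?_⟩
    intro y hy
    exact ((hS (hCsub hy.1)).resolve_right (by simpa using hy.2))
  · have hCS : C ⊆ S := by
      intro y hy
      exact (hS (hCsub hy)).resolve_right (fun h => hwC (mem_singleton_iff.1 h ▸ hy))
    have hCsubE : C ⊆ M.E \ {w} := hCS.trans hSsub
    have hdep : (conM M w).Dep C := by
      refine ⟨?_, by rw [conM_ground]; exact hCsubE⟩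
      rw [conM_indep_iff hw hCsubE]
      exact not_indep_superset hC.dep (subset_insert _ _)
    obtain ⟨C', hC', hC'sub⟩ := exists_circuit_subset (M.set_finite C (hCsubE.trans diff_subset)) hdep
    exact ⟨C', hC', hC'sub.trans hCS⟩

lemma binary_conM {M : Matroid α} [M.Finite] (hM : Binary M) {w : α} (hw : M.Indep {w}) :
    Binary (conM M w) := by
  have hwE : w ∈ M.E := hw.subset_ground rfl
  intro C₁ C₂ hC₁ hC₂ hne
  have hC₁sub : C₁ ⊆ M.E \ {w} := by have := hC₁.subset_ground; rwa [conM_ground] at this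
  have hC₂sub : C₂ ⊆ M.E \ {w} := by have := hC₂.subset_ground; rwa [conM_ground] at this
  have hwC₁ : w ∉ C₁ := fun h => (hC₁sub h).2 rfl
  have hwC₂ : w ∉ C₂ := fun h => (hC₂sub h).2 rfl
  have hSsub : symmDiff C₁ C₂ ⊆ M.E \ {w} :=
    (symmDiff_subset_union).trans (union_subset hC₁sub hC₂sub)
  obtain h₁ | h₁ := conM_circuit_lift hw hC₁ <;> obtain h₂ | h₂ := conM_circuit_lift hw hC₂
  · exact binary_conM_aux hw h₁ h₂ hne hM
      (symmDiff_sandwich Subset.rfl subset_union_left Subset.rfl subset_union_left) hSsub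
  · refine binary_conM_aux hw h₁ h₂ (fun h => hwC₁ (h ▸ mem_insert _ _)) hM
      (symmDiff_sandwich Subset.rfl subset_union_left (subset_insert _ _) ?_) hSsub
    rw [union_singleton]
  · refine binary_conM_aux hw h₁ h₂ (fun h => hwC₂ (h ▸ mem_insert _ _)) hM
      (symmDiff_sandwich (subset_insert _ _) ?_ Subset.rfl subset_union_left) hSsub
    rw [union_singleton]
  · refine binary_conM_aux hw h₁ h₂ ?_ hM
      (symmDiff_sandwich (subset_insert _ _) ?_ (subset_insert _ _) ?_) hSsub
    · intro h
      apply hne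
      have : insert w C₁ \ {w} = insert w C₂ \ {w} := by rw [h]
      rwa [insert_diff_self_of_notMem hwC₁, insert_diff_self_of_notMem hwC₂] at this
    · rw [union_singleton]
    · rw [union_singleton]

/-! ### Main theorem: in a binary matroid, circuit-cocircuit intersections are even -/

lemma restrict_diff_dual_eq (M : Matroid α) (w : α) :
    (M.restrict (M.E \ {w}))✶ = conM M✶ w := by
  rw [conM, Matroid.dual_dual, Matroid.dual_ground]

lemma even_inter_aux : ∀ (n : ℕ) (M : Matroid α), M.Finite → M.E.ncard = n → Binary M →
    ∀ C D : Set α, IsCircuit M C → IsCircuit M✶ D → Even ((C ∩ D).ncard) := by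
  intro n
  induction n using Nat.strong_induction_on with
  | _ n IH =>
  intro M hfin hn hM C D hC hD
  haveI : M.Finite := hfin
  have hCE : C ⊆ M.E := hC.subset_ground
  have hDE : D ⊆ M.E := by
    have := hD.subset_ground
    rwa [Matroid.dual_ground] at this
  have hEfin : M.E.Finite := M.ground_finite
  by_cases h0 : C ∩ D = ∅
  · simp [h0]
  obtain ⟨x0, hx0⟩ := nonempty_iff_ne_empty.2 h0
  -- Reduction 1 : contract an element of C \ D
  by_cases hR1 : ∃ w, w ∈ C \ D
  · obtain ⟨w, hwC, hwD⟩ := hR1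
    have hwE : w ∈ M.E := hCE hwC
    have hCne : ({w} : Set α) ≠ C := by
      intro h
      rw [← h] at hx0
      exact hwD ((mem_singleton_iff.1 hx0.1) ▸ hx0.2)
    have hw : M.Indep {w} :=
      hC.ssubset_indep (ssubset_of_subset_of_ne (singleton_subset_iff.2 hwC) hCne)
    haveI : (conM M w).Finite := conM_finite
    have hlt : (conM M w).E.ncard < n := by
      rw [conM_ground, ← hn]
      exact Set.ncard_diff_singleton_lt_of_mem hwE hEfin
    have hC' : IsCircuit (conM M w) (C \ {w}) :=
      conM_circuit_of_mem hC hwC (fun h => hCne h.symm)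
    have hD' : IsCircuit (conM M w)✶ D := by
      rw [conM_dual]
      refine (circuit_restrict_iff (by rw [Matroid.dual_ground]; exact diff_subset)).2
        ⟨hD, subset_diff_singleton hDE hwD⟩
    have heq : (C \ {w}) ∩ D = C ∩ D := by
      ext y
      constructor
      · rintro ⟨⟨hyC, _⟩, hyD⟩
        exact ⟨hyC, hyD⟩
      · rintro ⟨hyC, hyD⟩
        exact ⟨⟨hyC, fun h => hwD (h ▸ hyD)⟩, hyD⟩
    rw [← heq]
    exact IH _ hlt (conM M w) inferInstance rfl (binary_conM hM hw) _ _ hC' hD'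
  -- Reduction 2 : delete an element of D \ C
  by_cases hR2 : ∃ w, w ∈ D \ C
  · obtain ⟨w, hwD, hwC⟩ := hR2
    have hwE : w ∈ M.E := hDE hwD
    have hDne : ({w} : Set α) ≠ D := by
      intro h
      rw [← h] at hx0
      exact hwC ((mem_singleton_iff.1 hx0.2) ▸ hx0.1)
    have hw : M✶.Indep {w} :=
      hD.ssubset_indep (ssubset_of_subset_of_ne (singleton_subset_iff.2 hwD) hDne)
    set M' := M.restrict (M.E \ {w}) with hM'def
    haveI : M'.Finite := Matroid.restrict_finite (hEfin.subset diff_subset)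
    have hlt : M'.E.ncard < n := by
      rw [hM'def, Matroid.restrict_ground_eq, ← hn]
      exact Set.ncard_diff_singleton_lt_of_mem hwE hEfin
    have hC' : IsCircuit M' C :=
      (circuit_restrict_iff diff_subset).2 ⟨hC, subset_diff_singleton hCE hwC⟩
    have hD' : IsCircuit M'✶ (D \ {w}) := by
      rw [hM'def, restrict_diff_dual_eq]
      exact conM_circuit_of_mem (M := M✶) hD hwD (fun h => hDne h.symm)
    have heq : C ∩ (D \ {w}) = C ∩ D := by
      ext y
      constructor
      · rintro ⟨hyC, hyD, _⟩
        exact ⟨hyC, hyD⟩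
      · rintro ⟨hyC, hyD⟩
        exact ⟨hyC, hyD, fun h => hwC (h ▸ hyC)⟩
    rw [← heq]
    exact IH _ hlt M' inferInstance rfl (binary_restrict hM diff_subset) _ _ hC' hD'
  -- Now C = D
  push_neg at hR1 hR2
  have hCD : C = D := by
    apply Subset.antisymm
    · intro y hy
      by_contra hyD
      exact hR1 y ⟨hy, hyD⟩
    · intro y hy
      by_contra hyC
      exact hR2 y ⟨hy, hyC⟩
  subst hCD
  by_cases hw_ex : ∃ w, w ∈ M.E \ C
  · obtain ⟨w, hwE, hwC⟩ := hw_ex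
    by_cases hcl : w ∈ M.closure C
    · by_cases hwloop : M.Indep {w}
      · -- the splitting argument : C = T ∪ S with T, S circuits of the contraction
        have hx : x0 ∈ C := hx0.1
        have hindCx : M.Indep (C \ {x0}) := hC.ssubset_indep (sdiff_singleton_ssubset.2 hx)
        have hwclx : w ∈ M.closure (C \ {x0}) := by
          rw [hC.closure_diff_singleton hx]; exact hcl
        have hwnot : w ∉ C \ {x0} := fun h => hwC h.1
        obtain ⟨Cw, hCw, hwCw, hCwsub⟩ := exists_circuit_of_mem_closure hindCx hwclx hwnot
        set T := Cw \ {w} with hTdef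
        have hTC : T ⊆ C := by
          intro y hy
          rcases mem_insert_iff.1 (hCwsub hy.1) with h | h
          · exact absurd h hy.2
          · exact h.1
        have hTne : T.Nonempty := by
          rcases eq_empty_or_nonempty T with hT | hT
          · exfalso
            have hCweq : Cw = {w} := by
              apply Subset.antisymm
              · intro y hy
                by_contra hyw
                exact (eq_empty_iff_forall_notMem.1 hT) y ⟨hy, hyw⟩
              · exact singleton_subset_iff.2 hwCw
            rw [hCweq] at hCw
            exact hCw.dep.1 hwloop
          · exact hT
        have hCwC : Cw ≠ C := fun h => hwC (h ▸ hwCw)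
        obtain ⟨C'', hC'', hsub''⟩ := hM Cw C hCw hC hCwC
        have hsd1 : symmDiff Cw C ⊆ insert w (C \ T) := by
          intro y hy
          rcases Set.mem_symmDiff.1 hy with ⟨hy1, hy2⟩ | ⟨hy1, hy2⟩
          · rcases mem_insert_iff.1 (hCwsub hy1) with h | h
            · exact mem_insert_iff.2 (Or.inl h)
            · exact absurd h.1 hy2
          · refine mem_insert_iff.2 (Or.inr ⟨hy1, fun h => hy2 h.1⟩)
        have hwC'' : w ∈ C'' := by
          by_contra hwC''
          have hsubCT : C'' ⊆ C \ T := by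
            intro y hy
            rcases mem_insert_iff.1 (hsd1 (hsub'' hy)) with h | h
            · exact absurd (h ▸ hy) hwC''
            · exact h
          have hceq : C'' = C := hC.eq_of_dep_subset hC''.dep (hsubCT.trans diff_subset)
          obtain ⟨t, ht⟩ := hTne
          have htC'' : t ∈ C'' := by rw [hceq]; exact hTC ht
          exact (hsubCT htC'').2 ht
        set S := C'' \ {w} with hSdef
        have hSsub : S ⊆ C \ T := by
          intro y hy
          rcases mem_insert_iff.1 (hsd1 (hsub'' hy.1)) with h | h
          · exact absurd h hy.2
          · exact h
        have hSne : S.Nonempty := by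
          rcases eq_empty_or_nonempty S with hS | hS
          · exfalso
            have hCeq : C'' = {w} := by
              apply Subset.antisymm
              · intro y hy
                by_contra hyw
                exact (eq_empty_iff_forall_notMem.1 hS) y ⟨hy, hyw⟩
              · exact singleton_subset_iff.2 hwC''
            rw [hCeq] at hC''
            exact hC''.dep.1 hwloop
          · exact hS
        have hCwC'' : Cw ≠ C'' := by
          intro h
          obtain ⟨t, ht⟩ := hTne
          have htS : t ∈ S := ⟨by rw [← h]; exact ht.1, ht.2⟩
          exact (hSsub htS).2 ht
        obtain ⟨C₃, hC₃, hsub₃⟩ := hM Cw C'' hCw hC'' hCwC''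
        have hsd2 : symmDiff Cw C'' ⊆ T ∪ S := by
          intro y hy
          rcases Set.mem_symmDiff.1 hy with ⟨hy1, hy2⟩ | ⟨hy1, hy2⟩
          · exact Or.inl ⟨hy1, fun h => hy2 (h ▸ hwC'')⟩
          · exact Or.inr ⟨hy1, fun h => hy2 (h ▸ hwCw)⟩
        have hTSC : T ∪ S ⊆ C := union_subset hTC (hSsub.trans diff_subset)
        have hC₃C : C₃ = C := hC.eq_of_dep_subset hC₃.dep ((hsub₃.trans hsd2).trans hTSC)
        have hCTS : C = T ∪ S := by
          refine Subset.antisymm ?_ hTSC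
          rw [← hC₃C]
          exact hsub₃.trans hsd2
        have hdisj : Disjoint T S := disjoint_left.2 (fun t ht hts => (hSsub hts).2 ht)
        have hCwne1 : Cw ≠ {w} := by
          intro h
          obtain ⟨t, ht⟩ := hTne
          rw [hTdef, h] at ht
          exact ht.2 ht.1
        have hC''ne1 : C'' ≠ {w} := by
          intro h
          obtain ⟨t, ht⟩ := hSne
          rw [hSdef, h] at ht
          exact ht.2 ht.1
        have hT' : IsCircuit (conM M w) T := conM_circuit_of_mem hCw hwCw hCwne1
        have hS' : IsCircuit (conM M w) S := conM_circuit_of_mem hC'' hwC'' hC''ne1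
        have hD' : IsCircuit (conM M w)✶ C := by
          rw [conM_dual]
          exact (circuit_restrict_iff (by rw [Matroid.dual_ground]; exact diff_subset)).2
            ⟨hD, subset_diff_singleton hCE hwC⟩
        haveI : (conM M w).Finite := conM_finite
        have hlt : (conM M w).E.ncard < n := by
          rw [conM_ground, ← hn]
          exact Set.ncard_diff_singleton_lt_of_mem hwE hEfin
        have hevenT := IH _ hlt (conM M w) inferInstance rfl (binary_conM hM hwloop) T C hT' hD'
        have hevenS := IH _ hlt (conM M w) inferInstance rfl (binary_conM hM hwloop) S C hS' hD'
        rw [inter_eq_left.2 hTC] at hevenT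
        rw [inter_eq_left.2 (hSsub.trans diff_subset)] at hevenS
        rw [inter_self, hCTS,
          Set.ncard_union_eq hdisj (hEfin.subset (hTC.trans hCE))
            (hEfin.subset ((hSsub.trans diff_subset).trans hCE))]
        exact hevenT.add hevenS
      · -- w is a loop : delete it
        have hwE' : w ∈ M✶.E := by rwa [Matroid.dual_ground]
        have hcld : w ∉ M✶.closure C := by
          intro hmem
          have hsp : M✶.Spanning (M✶.E \ {w}) := by
            rw [Matroid.spanning_iff_closure_eq diff_subset]
            refine Subset.antisymm (M✶.closure_subset_ground _) ?_
            intro y hyE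
            by_cases hyw : y = w
            · subst hyw
              refine M✶.closure_subset_closure ?_ hmem
              refine subset_diff_singleton ?_ hwC
              rwa [Matroid.dual_ground]
            · exact M✶.subset_closure _ diff_subset ⟨hyE, hyw⟩
          have hcoin : M✶.Coindep {w} :=
            (Matroid.coindep_iff_compl_spanning (by simpa using hwE')).2 hsp
          rw [Matroid.coindep_def, Matroid.dual_dual] at hcoin
          exact hwloop hcoin
        set M' := M.restrict (M.E \ {w}) with hM'def
        haveI : M'.Finite := Matroid.restrict_finite (hEfin.subset diff_subset)
        have hlt : M'.E.ncard < n := by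
          rw [hM'def, Matroid.restrict_ground_eq, ← hn]
          exact Set.ncard_diff_singleton_lt_of_mem hwE hEfin
        have hC' : IsCircuit M' C :=
          (circuit_restrict_iff diff_subset).2 ⟨hC, subset_diff_singleton hCE hwC⟩
        have hD' : IsCircuit M'✶ C := by
          rw [hM'def, restrict_diff_dual_eq]
          exact conM_circuit_of_not_mem_closure (M := M✶) hD hwE' hcld
        exact IH _ hlt M' inferInstance rfl (binary_restrict hM diff_subset) _ _ hC' hD'
    · -- contract w, which is spanned by neither side
      have hw : M.Indep {w} := by
        by_contra hwl
        have hcirc : IsCircuit M {w} := singleton_circuit_of_dep hwl hwE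
        have h1 : w ∈ M.closure (({w} : Set α) \ {w}) := hcirc.mem_closure_diff_singleton rfl
        rw [diff_self] at h1
        exact hcl (M.closure_subset_closure (empty_subset C) h1)
      haveI : (conM M w).Finite := conM_finite
      have hlt : (conM M w).E.ncard < n := by
        rw [conM_ground, ← hn]
        exact Set.ncard_diff_singleton_lt_of_mem hwE hEfin
      have hC' : IsCircuit (conM M w) C := conM_circuit_of_not_mem_closure hC hwE hcl
      have hD' : IsCircuit (conM M w)✶ C := by
        rw [conM_dual]
        exact (circuit_restrict_iff (by rw [Matroid.dual_ground]; exact diff_subset)).2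
          ⟨hD, subset_diff_singleton hCE hwC⟩
      exact IH _ hlt (conM M w) inferInstance rfl (binary_conM hM hw) _ _ hC' hD'
  · -- the ground set equals C ; then |C| ≤ 2
    push_neg at hw_ex
    have hEC : M.E = C :=
      Subset.antisymm (fun y hy => Classical.byContradiction (fun hyC => hw_ex y ⟨hy, hyC⟩)) hCE
    rw [inter_self]
    by_contra hodd
    have hfinC : C.Finite := hEfin.subset hCE
    have hCnonempty : C ≠ ∅ := by rwa [inter_self] at h0
    have hne0 : C.ncard ≠ 0 := by
      intro h
      exact hCnonempty ((Set.ncard_eq_zero hfinC).1 h)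
    have hne1 : C.ncard ≠ 1 := by
      intro h1
      obtain ⟨x, hxeq⟩ := Set.ncard_eq_one.1 h1
      exact inter_ne_singleton hC hD (by rw [inter_self, hxeq])
    have hmod : C.ncard % 2 = 1 := Nat.not_even_iff.1 hodd
    have h3 : 3 ≤ C.ncard := by omega
    have hx : x0 ∈ C := hx0.1
    obtain ⟨y, hyC, hyx⟩ := Set.exists_ne_of_one_lt_ncard (s := C) (by omega) x0
    have hPsub : ({x0, y} : Set α) ⊆ C := by
      intro z hz
      rcases hz with rfl | hz
      · exact hx
      · exact mem_singleton_iff.1 hz ▸ hyC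
    have hPne : ({x0, y} : Set α) ≠ C := by
      intro h
      rw [← h, Set.ncard_pair (fun h' => hyx h'.symm)] at h3
      omega
    have hindP : M✶.Indep {x0, y} := hD.ssubset_indep (ssubset_of_subset_of_ne hPsub hPne)
    have hsp : M.Spanning (M.E \ ({x0, y} : Set α)) := by
      refine (Matroid.coindep_iff_compl_spanning (hPsub.trans hCE)).1 ?_
      exact Matroid.coindep_def.2 hindP
    have hEP : M.E \ ({x0, y} : Set α) = (C \ {x0}) \ {y} := by
      rw [hEC, diff_diff, singleton_union]
    rw [Matroid.spanning_iff_closure_eq diff_subset] at hsp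
    have hymem : y ∈ M.closure ((C \ {x0}) \ {y}) := by
      rw [← hEP, hsp]
      exact hCE hyC
    have hynot : y ∉ M.closure ((C \ {x0}) \ {y}) :=
      (hC.ssubset_indep (sdiff_singleton_ssubset.2 hx)).notMem_closure_diff_of_mem ⟨hyC, hyx⟩
    exact hynot hymem

/-! ### The set `ConnEx` as a circuit-cocircuit intersection -/

section Final

variable {M : Matroid α} {A B : Set α} {a a' : α}

lemma base_insert_iff_not_mem_closure (hA : M.IsBase A) (ha' : a' ∈ A) {b : α}
    (hbE : b ∈ M.E) (hbA : b ∉ A) :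
    M.IsBase (insert b (A \ {a'})) ↔ b ∉ M.closure (A \ {a'}) := by
  have hind : M.Indep (A \ {a'}) := hA.indep.subset diff_subset
  have hbA' : b ∉ A \ {a'} := fun h => hbA h.1
  constructor
  · intro hbase
    have := (hind.insert_indep_iff_of_notMem hbA').1 hbase.indep
    exact this.2
  · intro hnot
    refine hA.exchange_isBase_of_indep hbA ?_
    exact (hind.insert_indep_iff_of_notMem hbA').2 ⟨hbE, hnot⟩

lemma base_exchange_iff_mem_fundcct (hB : M.IsBase B) {C₀ : Set α} (hC₀ : IsCircuit M C₀)
    (haC₀ : a ∈ C₀) (hsub : C₀ ⊆ insert a B) (haB : a ∉ B) (haE : a ∈ M.E) {b : α}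
    (hbB : b ∈ B) : M.IsBase (insert a (B \ {b})) ↔ b ∈ C₀ := by
  have hab : a ≠ b := fun h => haB (h ▸ hbB)
  constructor
  · intro hbase
    by_contra hbC₀
    have hsub' : C₀ ⊆ insert a (B \ {b}) := by
      intro z hz
      rcases mem_insert_iff.1 (hsub hz) with rfl | hzB
      · exact mem_insert _ _
      · exact mem_insert_of_mem _ ⟨hzB, fun h => hbC₀ (h ▸ hz)⟩
    exact hC₀.dep.1 (hbase.indep.subset hsub')
  · intro hbC₀
    have hindB : M.Indep (B \ {b}) := hB.indep.subset diff_subset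
    have haB' : a ∉ B \ {b} := fun h => haB h.1
    have hindep : M.Indep (insert a (B \ {b})) := by
      rw [hindB.insert_indep_iff_of_notMem haB']
      refine ⟨haE, fun hacl => ?_⟩
      have hbcl : b ∈ M.closure (C₀ \ {b}) := hC₀.mem_closure_diff_singleton hbC₀
      have hsub' : C₀ \ {b} ⊆ insert a (B \ {b}) := by
        intro z hz
        rcases mem_insert_iff.1 (hsub hz.1) with rfl | hzB
        · exact mem_insert _ _
        · exact mem_insert_of_mem _ ⟨hzB, hz.2⟩
      have : b ∈ M.closure (B \ {b}) := by
        have h1 : M.closure (C₀ \ {b}) ⊆ M.closure (insert a (B \ {b})) :=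
          M.closure_subset_closure hsub'
        rw [Matroid.closure_insert_eq_of_mem_closure hacl] at h1
        exact h1 hbcl
      exact hB.indep.notMem_closure_diff_of_mem hbB this
    exact hB.exchange_isBase_of_indep haB hindep

lemma cocircuit_compl_closure (hA : M.IsBase A) (ha' : a' ∈ A) :
    IsCircuit M✶ (M.E \ M.closure (A \ {a'})) := by
  have hind : M.Indep (A \ {a'}) := hA.indep.subset diff_subset
  have hclE : M.closure (A \ {a'}) ⊆ M.E := M.closure_subset_ground _
  have ha'E : a' ∈ M.E := hA.subset_ground ha'
  have ha'ncl : a' ∉ M.closure (A \ {a'}) := hA.indep.notMem_closure_diff_of_mem ha'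
  constructor
  · refine ⟨?_, by rw [Matroid.dual_ground]; exact diff_subset⟩
    intro hindep
    have hcoin : M.Coindep (M.E \ M.closure (A \ {a'})) := Matroid.coindep_def.2 hindep
    have hsp := (Matroid.coindep_iff_compl_spanning diff_subset).1 hcoin
    rw [Set.diff_diff_cancel_left hclE, Matroid.spanning_iff_closure_eq hclE,
      Matroid.closure_closure] at hsp
    exact ha'ncl (hsp ▸ ha'E)
  · intro S hS
    obtain ⟨x, hxD, hxS⟩ := exists_of_ssubset hS
    have hSsub : S ⊆ M.E \ M.closure (A \ {a'}) := hS.subset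
    rw [← Matroid.coindep_def]
    rw [Matroid.coindep_iff_compl_spanning (hSsub.trans diff_subset)]
    by_cases hxA : x ∈ A
    · have hxa' : x = a' := by
        by_contra hne
        exact hxD.2 (M.subset_closure _ (diff_subset.trans hA.subset_ground) ⟨hxA, hne⟩)
      rw [Matroid.spanning_iff_exists_isBase_subset diff_subset]
      refine ⟨A, hA, ?_⟩
      intro z hzA
      refine ⟨hA.subset_ground hzA, fun hzS => ?_⟩
      by_cases hza : z = a'
      · exact hxS (by rw [hxa', ← hza]; exact hzS)
      · exact (hSsub hzS).2 (M.subset_closure _ (diff_subset.trans hA.subset_ground) ⟨hzA, hza⟩)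
    · have hbase : M.IsBase (insert x (A \ {a'})) :=
        (base_insert_iff_not_mem_closure hA ha' hxD.1 hxA).2 hxD.2
      rw [Matroid.spanning_iff_exists_isBase_subset diff_subset]
      refine ⟨_, hbase, ?_⟩
      intro z hz
      rcases mem_insert_iff.1 hz with rfl | hzA
      · exact ⟨hxD.1, hxS⟩
      · refine ⟨hA.subset_ground hzA.1, fun hzS => ?_⟩
        exact (hSsub hzS).2 (M.subset_closure _ (diff_subset.trans hA.subset_ground) hzA)

theorem stmt_15' (M : Matroid α) [M.Finite] {A B : Set α} {a a' : α}
    (hM : Binary M)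
    (hA : M.IsBase A) (hB : M.IsBase B) (hAB : Disjoint A B)
    (ha : a ∈ A) (ha' : a' ∈ A) (hne : a ≠ a') :
    Even (ConnEx M a a' A B).ncard := by
  have haE : a ∈ M.E := hA.subset_ground ha
  have haB : a ∉ B := fun h => (disjoint_left.1 hAB) ha h
  have hacl : a ∈ M.closure B := by
    rw [hB.closure_eq]; exact haE
  obtain ⟨C₀, hC₀, haC₀, hC₀sub⟩ := exists_circuit_of_mem_closure hB.indep hacl haB
  have hD₀ : IsCircuit M✶ (M.E \ M.closure (A \ {a'})) := cocircuit_compl_closure hA ha'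
  have hconn : ConnEx M a a' A B = C₀ ∩ (M.E \ M.closure (A \ {a'})) := by
    ext b
    constructor
    · rintro ⟨hbB, hb1, hb2⟩
      have hbE : b ∈ M.E := hB.subset_ground hbB
      have hbA : b ∉ A := fun h => (disjoint_left.1 hAB) h hbB
      refine ⟨(base_exchange_iff_mem_fundcct hB hC₀ haC₀ hC₀sub haB haE hbB).1 hb2,
        hbE, (base_insert_iff_not_mem_closure hA ha' hbE hbA).1 hb1⟩
    · rintro ⟨hbC₀, hbE, hbncl⟩
      have hba : b ≠ a := by
        intro h
        subst h
        exact hbncl (M.subset_closure _ (diff_subset.trans hA.subset_ground) ⟨ha, hne⟩)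
      have hbB : b ∈ B := (mem_insert_iff.1 (hC₀sub hbC₀)).resolve_left hba
      have hbA : b ∉ A := fun h => (disjoint_left.1 hAB) h hbB
      exact ⟨hbB, (base_insert_iff_not_mem_closure hA ha' hbE hbA).2 hbncl,
        (base_exchange_iff_mem_fundcct hB hC₀ haC₀ hC₀sub haB haE hbB).2 hbC₀⟩
  rw [hconn]
  exact even_inter_aux (M.E.ncard) M inferInstance rfl hM _ _ hC₀ hD₀

end Final

theorem stmt_15 (M : Matroid α) [M.Finite] {A B : Set α} {a a' : α}
    (hM : Binary M)
    (hA : M.IsBase A) (hB : M.IsBase B) (hAB : Disjoint A B)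
    (ha : a ∈ A) (ha' : a' ∈ A) (hne : a ≠ a') :
    Even (ConnEx M a a' A B).ncard := by
  exact stmt_15' M hM hA hB hAB ha ha' hne
end

section
/- Let M be a binary matroid, B a basis, b, b' distinct elements of B, and x ∉ B with b, b' ∈ C(x,B). If y ∉ B, y ≠ x, and y ∉ cl(B - b) and y ∉ cl(B - b'), then y ∈ cl((B \ {b,b'}) + x). -/
open Set

variable {α : Type*}

lemma exists_circuit_of_dep_aux (M : Matroid α) [M.Finite] :
    ∀ n (D : Set α), D.ncard ≤ n → M.Dep D → ∃ C, C ⊆ D ∧ IsCircuit M C := by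
  intro n
  induction n with
  | zero =>
    intro D hn hD
    have hfin := M.set_finite D hD.subset_ground
    have : D = ∅ := by rw [← Set.ncard_eq_zero hfin]; omega
    exact absurd (this ▸ M.empty_indep) hD.not_indep
  | succ n IH =>
    intro D hn hD
    by_cases h : ∀ D', D' ⊂ D → M.Indep D'
    · exact ⟨D, Subset.rfl, hD, h⟩
    · push_neg at h
      obtain ⟨D', hss, hdep⟩ := h
      have hdep' : M.Dep D' := ⟨hdep, hss.subset.trans hD.subset_ground⟩
      have hlt : D'.ncard < D.ncard :=
        Set.ncard_lt_ncard hss (M.set_finite D hD.subset_ground)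
      obtain ⟨C, hCD, hC⟩ := IH D' (by omega) hdep'
      exact ⟨C, hCD.trans hss.subset, hC⟩

lemma exists_circuit_of_dep (M : Matroid α) [M.Finite] {D : Set α} (hD : M.Dep D) :
    ∃ C, C ⊆ D ∧ IsCircuit M C :=
  exists_circuit_of_dep_aux M D.ncard D le_rfl hD

lemma circuit_mem_closure {M : Matroid α} {C : Set α} {e : α}
    (hC : IsCircuit M C) (he : e ∈ C) : e ∈ M.closure (C \ {e}) := by
  have hI : M.Indep (C \ {e}) := hC.2 _ (Set.sdiff_singleton_ssubset.mpr he)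
  rw [hI.mem_closure_iff]
  left
  rw [Set.insert_diff_singleton, Set.insert_eq_of_mem he]
  exact hC.1

theorem stmt_18 (M : Matroid α) [M.Finite] {B Cx : Set α} {b b' x y : α}
    (hM : Binary M) (hB : M.IsBase B)
    (hbB : b ∈ B) (hb'B : b' ∈ B) (hbb' : b ≠ b')
    (hx : x ∉ B) (hCx : IsFundCct M Cx x B) (hbx : b ∈ Cx) (hb'x : b' ∈ Cx)
    (hyE : y ∈ M.E) (hy : y ∉ B) (hyx : y ≠ x)
    (hy1 : y ∉ M.closure (B \ {b})) (hy2 : y ∉ M.closure (B \ {b'})) :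
    y ∈ M.closure (insert x (B \ {b, b'})) := by
  obtain ⟨hCxc, hxCx, hCxB⟩ := hCx
  -- fundamental circuit of y
  obtain ⟨Cy, hCyB, hCyc⟩ := exists_circuit_of_dep M (hB.insert_dep ⟨hyE, hy⟩)
  have hyCy : y ∈ Cy := by
    by_contra h
    have : Cy ⊆ B := fun z hz => ((hCyB hz).resolve_left (fun e => h (e ▸ hz)))
    exact hCyc.1.not_indep (hB.indep.subset this)
  -- b ∈ Cy and b' ∈ Cy
  have hbmem : ∀ c : α, c ∈ B → y ∉ M.closure (B \ {c}) → c ∈ Cy := by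
    intro c _ hyc
    by_contra h
    apply hyc
    refine M.closure_subset_closure ?_ (circuit_mem_closure hCyc hyCy)
    intro z hz
    rcases hCyB hz.1 with rfl | hzB
    · exact absurd rfl hz.2
    · exact ⟨hzB, fun e => h (e ▸ hz.1)⟩
  have hbCy := hbmem b hbB hy1
  have hb'Cy := hbmem b' hb'B hy2
  -- x ∉ Cy, y ∉ Cx
  have hxCy : x ∉ Cy := fun h => by
    rcases hCyB h with rfl | hxB
    · exact hyx rfl
    · exact hx hxB
  have hyCx : y ∉ Cx := fun h => by
    rcases hCxB h with rfl | hyB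
    · exact hyx rfl
    · exact hy hyB
  have hne : Cx ≠ Cy := fun h => hxCy (h ▸ hxCx)
  obtain ⟨C, hCc, hCsub⟩ := hM Cx Cy hCxc hCyc hne
  rw [Set.symmDiff_def] at hCsub
  -- y ∈ C
  have hyC : y ∈ C := by
    by_contra h
    have hxC : x ∈ C := by
      by_contra hxC
      have : C ⊆ B := by
        intro z hz
        rcases hCsub hz with ⟨hz1, _⟩ | ⟨hz1, _⟩
        · rcases hCxB hz1 with rfl | hzB
          · exact absurd hz hxC
          · exact hzB
        · rcases hCyB hz1 with rfl | hzB
          · exact absurd hz h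
          · exact hzB
      exact hCc.1.not_indep (hB.indep.subset this)
    have hCne : C ≠ Cx := by
      intro e
      rcases hCsub (e ▸ hbx) with ⟨_, hb2⟩ | ⟨_, hb2⟩
      · exact hb2 hbCy
      · exact hb2 hbx
    obtain ⟨C', hC'c, hC'sub⟩ := hM C Cx hCc hCxc hCne
    rw [Set.symmDiff_def] at hC'sub
    have : C' ⊆ B := by
      intro z hz
      rcases hC'sub hz with ⟨hz1, hz2⟩ | ⟨hz1, hz2⟩
      · rcases hCsub hz1 with ⟨hz3, _⟩ | ⟨hz3, _⟩
        · exact absurd hz3 hz2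
        · rcases hCyB hz3 with rfl | hzB
          · exact absurd hz1 h
          · exact hzB
      · rcases hCxB hz1 with rfl | hzB
        · exact absurd hxC hz2
        · exact hzB
    exact hC'c.1.not_indep (hB.indep.subset this)
  -- conclude
  refine M.closure_subset_closure ?_ (circuit_mem_closure hCc hyC)
  intro z hz
  have hzb : z ≠ b := by
    rintro rfl
    rcases hCsub hz.1 with ⟨_, h2⟩ | ⟨_, h2⟩
    · exact h2 hbCy
    · exact h2 hbx
  have hzb' : z ≠ b' := by
    rintro rfl
    rcases hCsub hz.1 with ⟨_, h2⟩ | ⟨_, h2⟩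
    · exact h2 hb'Cy
    · exact h2 hb'x
  rcases hCsub hz.1 with ⟨h1, _⟩ | ⟨h1, _⟩
  · rcases hCxB h1 with rfl | hzB
    · exact Set.mem_insert _ _
    · exact Set.mem_insert_of_mem _ ⟨hzB, by simp [hzb, hzb']⟩
  · rcases hCyB h1 with rfl | hzB
    · exact absurd rfl hz.2
    · exact Set.mem_insert_of_mem _ ⟨hzB, by simp [hzb, hzb']⟩
end
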